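/- Work in ℝⁿ with the standard inner product ⟨·,·⟩. Let x, x̃, s, s̃ ∈ ℝⁿ satisfy: ⟨s̃, x⟩ = ⟨s, x̃⟩ = ϑ for some ϑ > 0; ⟨s, x⟩ > 0; ⟨s̃, x̃⟩ > 0. With μ := ⟨s,x⟩/ϑ, define δ_P := x − μ • x̃ and δ_D := s − μ • s̃, and assume ⟨δ_D, δ_P⟩ > 0. Let H be a symmetric positive-definite n×n real matrix. Define H₁ := (I − (⟨s,x⟩)⁻¹ x sᵀ) H (I − (⟨s,x⟩)⁻¹ s xᵀ) + (⟨s,x⟩)⁻¹ x xᵀ and H₂ := (I − (⟨δ_D, δ_P⟩)⁻¹ δ_P δ_Dᵀ) H₁ (I − (⟨δ_D, δ_P⟩)⁻¹ δ_D δ_Pᵀ) + (⟨δ_D, δ_P⟩)⁻¹ δ_P δ_Pᵀ. Then H₂ is symmetric positive definite, H₂ s = x, and H₂ s̃ = x̃. -/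

import Mathlib

open Matrix

lemma vmv_mulVec {n : ℕ} (a b v : Fin n → ℝ) :
    vecMulVec a b *ᵥ v = (b ⬝ᵥ v) • a := by
  funext i
  simp only [mulVec, dotProduct, vecMulVec_apply, Pi.smul_apply, smul_eq_mul, Finset.sum_mul]
  exact Finset.sum_congr rfl fun j _ => by ring

lemma vmv_transpose {n : ℕ} (a b : Fin n → ℝ) :
    (vecMulVec a b)ᵀ = vecMulVec b a := by
  ext i j; simp [vecMulVec_apply, mul_comm]

lemma bfgs_step {n : ℕ} (x s : Fin n → ℝ) (h : 0 < s ⬝ᵥ x)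
    (H : Matrix (Fin n) (Fin n) ℝ) (hH : H.PosDef) :
    ((1 - (s ⬝ᵥ x)⁻¹ • vecMulVec x s) * H * (1 - (s ⬝ᵥ x)⁻¹ • vecMulVec s x)
      + (s ⬝ᵥ x)⁻¹ • vecMulVec x x).PosDef ∧
    (((1 - (s ⬝ᵥ x)⁻¹ • vecMulVec x s) * H * (1 - (s ⬝ᵥ x)⁻¹ • vecMulVec s x)
      + (s ⬝ᵥ x)⁻¹ • vecMulVec x x) *ᵥ s = x) := by
  set c : ℝ := (s ⬝ᵥ x)⁻¹ with hc
  have hc0 : 0 < c := inv_pos.mpr h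
  set A : Matrix (Fin n) (Fin n) ℝ := 1 - c • vecMulVec x s with hA
  set B : Matrix (Fin n) (Fin n) ℝ := 1 - c • vecMulVec s x with hB
  have hAT : Aᵀ = B := by
    rw [hA, hB, transpose_sub, transpose_one, transpose_smul, vmv_transpose]
  have hBT : Bᵀ = A := by rw [← hAT, transpose_transpose]
  have hHt : Hᵀ = H := by
    rw [← conjTranspose_eq_transpose_of_trivial]; exact hH.1
  have hBv : ∀ v : Fin n → ℝ, B *ᵥ v = v - (c * (x ⬝ᵥ v)) • s := by
    intro v
    rw [hB, sub_mulVec, one_mulVec, smul_mulVec, vmv_mulVec, smul_smul]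
  have hcsx : c * (s ⬝ᵥ x) = 1 := inv_mul_cancel₀ (ne_of_gt h)
  have hBs : B *ᵥ s = 0 := by
    rw [hBv, dotProduct_comm, hcsx, one_smul, sub_self]
  have hquad : ∀ v : Fin n → ℝ,
      v ⬝ᵥ ((A * H * B + c • vecMulVec x x) *ᵥ v)
        = (B *ᵥ v) ⬝ᵥ (H *ᵥ (B *ᵥ v)) + c * ((x ⬝ᵥ v) * (x ⬝ᵥ v)) := by
    intro v
    rw [add_mulVec, dotProduct_add, Matrix.mul_assoc, ← mulVec_mulVec, ← mulVec_mulVec,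
      dotProduct_mulVec, ← mulVec_transpose, hAT, smul_mulVec, vmv_mulVec,
      dotProduct_smul, dotProduct_smul, smul_eq_mul, smul_eq_mul, dotProduct_comm v x]
  have hHpos : ∀ u : Fin n → ℝ, u ≠ 0 → 0 < u ⬝ᵥ (H *ᵥ u) := by
    intro u hu; have := hH.dotProduct_mulVec_pos hu; simpa using this
  have hHnn : ∀ u : Fin n → ℝ, 0 ≤ u ⬝ᵥ (H *ᵥ u) := by
    intro u; have := hH.posSemidef.dotProduct_mulVec_nonneg u; simpa using this
  constructor
  · refine PosDef.of_dotProduct_mulVec_pos ?_ ?_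
    · rw [IsHermitian, conjTranspose_eq_transpose_of_trivial, transpose_add, transpose_smul,
        vmv_transpose, transpose_mul, transpose_mul, hBT, hHt, hAT, Matrix.mul_assoc]
    · intro v hv
      have hstar : star v = v := by simp
      rw [hstar, hquad]
      by_cases hw : B *ᵥ v = 0
      · have hxv : x ⬝ᵥ v ≠ 0 := by
          intro h0
          apply hv
          have := hBv v
          rw [hw, h0, mul_zero, zero_smul, sub_zero] at this
          exact this.symm
        rw [hw, zero_dotProduct, zero_add]
        exact mul_pos hc0 (mul_self_pos.mpr hxv)
      · exact add_pos_of_pos_of_nonneg (hHpos _ hw)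
          (mul_nonneg hc0.le (mul_self_nonneg _))
  · rw [add_mulVec, Matrix.mul_assoc, ← mulVec_mulVec, ← mulVec_mulVec, hBs, mulVec_zero,
      mulVec_zero, zero_add, smul_mulVec, vmv_mulVec, dotProduct_comm, smul_smul, hcsx,
      one_smul]

/-- Theorem 4.2: the pair of BFGS-type low-rank updates produces a symmetric
positive-definite matrix mapping `s` to `x` and `s̃` to `x̃`. -/
theorem stmt_11 (n : ℕ) (ϑ : ℝ) (hϑ : 0 < ϑ)
    (x xt s st : Fin n → ℝ)
    (h1 : st ⬝ᵥ x = ϑ) (h2 : s ⬝ᵥ xt = ϑ)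
    (h3 : 0 < s ⬝ᵥ x) (h4 : 0 < st ⬝ᵥ xt)
    (μ : ℝ) (hμ : μ = s ⬝ᵥ x / ϑ)
    (δP δD : Fin n → ℝ) (hδP : δP = x - μ • xt) (hδD : δD = s - μ • st)
    (h5 : 0 < δD ⬝ᵥ δP)
    (H : Matrix (Fin n) (Fin n) ℝ) (hH : H.PosDef)
    (H1 H2 : Matrix (Fin n) (Fin n) ℝ)
    (hH1 : H1 = (1 - (s ⬝ᵥ x)⁻¹ • vecMulVec x s) * H * (1 - (s ⬝ᵥ x)⁻¹ • vecMulVec s x)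
        + (s ⬝ᵥ x)⁻¹ • vecMulVec x x)
    (hH2 : H2 = (1 - (δD ⬝ᵥ δP)⁻¹ • vecMulVec δP δD) * H1 * (1 - (δD ⬝ᵥ δP)⁻¹ • vecMulVec δD δP)
        + (δD ⬝ᵥ δP)⁻¹ • vecMulVec δP δP) :
    H2.PosDef ∧ H2 *ᵥ s = x ∧ H2 *ᵥ st = xt := by
  obtain ⟨hP1, hs1⟩ := bfgs_step x s h3 H hH
  rw [← hH1] at hP1 hs1
  obtain ⟨hP2, hd2⟩ := bfgs_step δP δD h5 H1 hP1
  rw [← hH2] at hP2 hd2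
  have hϑ0 : ϑ ≠ 0 := ne_of_gt hϑ
  have hμϑ : μ * ϑ = s ⬝ᵥ x := by rw [hμ, div_mul_cancel₀ _ hϑ0]
  have hμpos : 0 < μ := by rw [hμ]; exact div_pos h3 hϑ
  -- orthogonality facts
  have hδPs : δP ⬝ᵥ s = 0 := by
    rw [hδP, sub_dotProduct, smul_dotProduct, dotProduct_comm x s, dotProduct_comm xt s,
      h2, smul_eq_mul, hμϑ, sub_self]
  have hδDx : δD ⬝ᵥ x = 0 := by
    rw [hδD, sub_dotProduct, smul_dotProduct, h1, smul_eq_mul, hμϑ, sub_self]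
  -- H2 *ᵥ s = x
  set c2 : ℝ := (δD ⬝ᵥ δP)⁻¹ with hc2
  have hB2s : (1 - c2 • vecMulVec δD δP) *ᵥ s = s := by
    rw [sub_mulVec, one_mulVec, smul_mulVec, vmv_mulVec, hδPs, zero_smul, smul_zero,
      sub_zero]
  have hA2x : (1 - c2 • vecMulVec δP δD) *ᵥ x = x := by
    rw [sub_mulVec, one_mulVec, smul_mulVec, vmv_mulVec, hδDx, zero_smul, smul_zero,
      sub_zero]
  have hlast : (c2 • vecMulVec δP δP) *ᵥ s = 0 := by
    rw [smul_mulVec, vmv_mulVec, hδPs, zero_smul, smul_zero]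
  have hH2s : H2 *ᵥ s = x := by
    rw [hH2, add_mulVec, Matrix.mul_assoc, ← mulVec_mulVec, ← mulVec_mulVec, hB2s, hs1, hA2x,
      hlast, add_zero]
  have hH2st : H2 *ᵥ st = xt := by
    have hst : st = μ⁻¹ • (s - δD) := by
      rw [hδD, sub_sub_cancel, smul_smul, inv_mul_cancel₀ (ne_of_gt hμpos), one_smul]
    rw [hst, mulVec_smul, mulVec_sub, hH2s, hd2, hδP, sub_sub_cancel, smul_smul,
      inv_mul_cancel₀ (ne_of_gt hμpos), one_smul]
  exact ⟨hP2, hH2s, hH2st⟩
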